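/- arXiv:1602.06413 — 2 statements merged into one kernel-verified Lean document; each statement's English description precedes it below -/
import Mathlib

section
/- Special case of Hermann's theorem for rank 2: if T ∈ V₂ is invariant under a rotation R_θ about the z-axis by angle θ = 2π/n with n ≥ 3 (i.e., R_θ T R_θᵀ = T), then T is invariant under all rotations about the z-axis, and hence T is a scalar multiple of diag(−1/3, −1/3, 2/3). -/
open Matrix Real

/-- Rotation about the z axis by angle `θ`. -/
noncomputable def Rz (θ : ℝ) : Matrix (Fin 3) (Fin 3) ℝ :=
  !![Real.cos θ, -Real.sin θ, 0;
     Real.sin θ,  Real.cos θ, 0;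
     0, 0, 1]

lemma RzT (θ : ℝ) : (Rz θ)ᵀ = !![Real.cos θ, Real.sin θ, 0; -Real.sin θ, Real.cos θ, 0; 0, 0, 1] := by
  ext i j; fin_cases i <;> fin_cases j <;> simp [Rz]

lemma diag_eq (x : ℝ) :
    Matrix.diagonal ![x, x, -2*x] = !![x,0,0;0,x,0;0,0,-2*x] := by
  ext i j; fin_cases i <;> fin_cases j <;> simp [Matrix.diagonal, Matrix.vecHead, Matrix.vecTail]

lemma inv_diag (θ x : ℝ) :
    Rz θ * Matrix.diagonal ![x, x, -2*x] * (Rz θ)ᵀ = Matrix.diagonal ![x, x, -2*x] := by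
  rw [RzT, diag_eq]
  ext i j
  fin_cases i <;> fin_cases j <;>
    simp [Rz, Matrix.mul_apply, Matrix.vecMul, dotProduct, Fin.sum_univ_three,
      Matrix.vecHead, Matrix.vecTail]
  all_goals (try ring_nf)
  all_goals linear_combination x * Real.sin_sq_add_cos_sq θ

/-- Hermann's theorem for rank 2: if a symmetric traceless 3×3 matrix `T`
is invariant under the rotation about the z-axis by `2π/n` with `n ≥ 3`, then `T` is
invariant under all rotations about the z-axis, and hence `T` is a scalar multiple of
`diag(−1/3, −1/3, 2/3)`. -/
theorem stmt_9 (n : ℕ) (hn : 3 ≤ n) (T : Matrix (Fin 3) (Fin 3) ℝ)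
    (hTsymm : T.IsSymm) (hTtr : T.trace = 0)
    (hinv : Rz (2 * π / n) * T * (Rz (2 * π / n))ᵀ = T) :
    (∀ θ : ℝ, Rz θ * T * (Rz θ)ᵀ = T) ∧
    (∃ c : ℝ, T = c • Matrix.diagonal ![-1/3, -1/3, 2/3]) := by
  set θ := 2 * π / n with hθ
  have hn0 : (0:ℝ) < n := by positivity
  have hθpos : 0 < θ := by
    apply div_pos (by positivity) hn0
  have hθlt : θ < π := by
    rw [hθ, div_lt_iff₀ hn0]
    have h3 : (3:ℝ) ≤ n := by exact_mod_cast hn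
    nlinarith [Real.pi_pos]
  have hs : 0 < Real.sin θ := Real.sin_pos_of_pos_of_lt_pi hθpos hθlt
  have hsne : Real.sin θ ≠ 0 := ne_of_gt hs
  -- symmetry entries
  have hsymm : ∀ i j, T i j = T j i := fun i j => by
    have := congrFun (congrFun hTsymm j) i
    simpa [Matrix.transpose_apply] using this
  rw [RzT] at hinv
  have h02 := congrFun (congrFun hinv 0) 2
  have h12 := congrFun (congrFun hinv 1) 2
  have h00 := congrFun (congrFun hinv 0) 0
  have h01 := congrFun (congrFun hinv 0) 1
  simp [Rz, Matrix.mul_apply, Matrix.vecMul, dotProduct, Fin.sum_univ_three] at h02 h12 h00 h01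
  rw [hsymm 1 0] at h00 h01
  -- d = e = 0
  have hd : T 0 2 = 0 := by
    have key : ((Real.cos θ - 1)^2 + Real.sin θ^2) * T 0 2 = 0 := by
      linear_combination (Real.cos θ - 1) * h02 + Real.sin θ * h12
    have hpos : (0:ℝ) < (Real.cos θ - 1)^2 + Real.sin θ^2 := by positivity
    exact (mul_eq_zero.mp key).resolve_left (ne_of_gt hpos)
  have he : T 1 2 = 0 := by
    have h' : Real.sin θ * T 1 2 = 0 := by
      linear_combination -h02 + (Real.cos θ - 1) * hd
    exact (mul_eq_zero.mp h').resolve_left hsne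
  -- a = c'
  have ha : T 0 0 = T 1 1 := by
    have key : Real.sin θ * (T 0 0 - T 1 1) = 0 := by
      linear_combination (Real.cos θ) * h01 - (Real.sin θ) * h00 +
        (Real.sin θ * T 1 1 - Real.cos θ * T 0 1) * (Real.sin_sq_add_cos_sq θ)
    have := (mul_eq_zero.mp key).resolve_left hsne
    linarith
  -- b = 0
  have hb : T 0 1 = 0 := by
    have key : -2 * Real.sin θ^2 * T 0 1 = 0 := by
      linear_combination h01 - T 0 1 * (Real.sin_sq_add_cos_sq θ) -
        (Real.cos θ * Real.sin θ) * ha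
    have h2 : Real.sin θ^2 ≠ 0 := pow_ne_zero 2 hsne
    have := mul_eq_zero.mp key
    rcases this with h | h
    · exact absurd h (by simp [h2])
    · exact h
  -- trace
  have htr : T 0 0 + T 1 1 + T 2 2 = 0 := by
    have := hTtr
    simpa [Matrix.trace, Fin.sum_univ_three] using this
  have hf : T 2 2 = -2 * T 0 0 := by linarith
  have hT : T = Matrix.diagonal ![T 0 0, T 0 0, -2 * T 0 0] := by
    ext i j
    fin_cases i <;> fin_cases j <;>
      simp [Matrix.diagonal, Matrix.vecHead, Matrix.vecTail] <;>
      first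
        | linarith [ha]
        | (rw [hsymm]; assumption)
        | assumption
  constructor
  · intro φ
    rw [hT]; exact inv_diag φ (T 0 0)
  · refine ⟨-3 * T 0 0, ?_⟩
    rw [hT]
    ext i j
    fin_cases i <;> fin_cases j <;> simp [Matrix.diagonal, Matrix.vecHead, Matrix.vecTail] <;> ring
end

section
/- A linear map S : V₂ → V₂ is fixed on the left by all rotations about the z-axis (D(R_θ) ∘ S = S for all θ) if and only if the range of S is contained in the span of the single tensor L₀ = √(3/2)(e₃⊗e₃ − I/3); equivalently, in the standard basis, only the first row of the matrix of S can be nonzero. -/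
open Matrix Real

/-- `L₀ = √(3/2)(e₃⊗e₃ − I/3)`. -/
noncomputable def L0 : Matrix (Fin 3) (Fin 3) ℝ :=
  Real.sqrt (3 / 2) • (single 2 2 (1 : ℝ) - (3 : ℝ)⁻¹ • (1 : Matrix (Fin 3) (Fin 3) ℝ))

lemma Rz_orth (θ : ℝ) : Rz θ * (Rz θ)ᵀ = 1 := by
  ext i j
  fin_cases i <;> fin_cases j <;>
    simp [Rz, Matrix.mul_apply, Fin.sum_univ_three, Matrix.one_apply, Matrix.transpose_apply,
      Matrix.vecHead, Matrix.vecTail] <;>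
    nlinarith [Real.sin_sq_add_cos_sq θ]

lemma Rz_std (θ : ℝ) : Rz θ * single 2 2 (1:ℝ) * (Rz θ)ᵀ = single 2 2 1 := by
  ext i j
  fin_cases i <;> fin_cases j <;>
    simp [Rz, Matrix.mul_apply, Fin.sum_univ_three, Matrix.single, Matrix.transpose_apply,
      Matrix.vecHead, Matrix.vecTail]

lemma Rz_L0 (θ : ℝ) : Rz θ * L0 * (Rz θ)ᵀ = L0 := by
  rw [L0, Matrix.mul_smul, Matrix.smul_mul, Matrix.mul_sub, Matrix.sub_mul, Matrix.mul_smul,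
    Matrix.smul_mul, Matrix.mul_one, Rz_std, Rz_orth]

/-- A linear map `S : V₂ → V₂` is fixed on the left by all rotations about
the z-axis (`D(R_θ) ∘ S = S` for all `θ`) if and only if the range of `S` is contained in
the span of the single tensor `L₀`. -/
theorem stmt_16 (S : Matrix (Fin 3) (Fin 3) ℝ →ₗ[ℝ] Matrix (Fin 3) (Fin 3) ℝ)
    (hS : ∀ T : Matrix (Fin 3) (Fin 3) ℝ, T.IsSymm → T.trace = 0 →
      (S T).IsSymm ∧ (S T).trace = 0) :
    (∀ θ : ℝ, ∀ T : Matrix (Fin 3) (Fin 3) ℝ, T.IsSymm → T.trace = 0 →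
        Rz θ * S T * (Rz θ)ᵀ = S T)
    ↔ (∀ T : Matrix (Fin 3) (Fin 3) ℝ, T.IsSymm → T.trace = 0 →
        ∃ c : ℝ, S T = c • L0) := by
  constructor
  · intro H T hT htr
    obtain ⟨hsymm, htrace⟩ := hS T hT htr
    set M := S T with hM
    have E := H (Real.pi / 2) T hT htr
    have key : ∀ i j : Fin 3, (Rz (Real.pi/2) * M * (Rz (Real.pi/2))ᵀ) i j = M i j := by
      intro i j; rw [E]
    have e01 : M 0 1 = 0 := by
      have h1 := key 0 1
      have h2 := hsymm.apply 0 1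
      simp [Rz, Matrix.mul_apply, Fin.sum_univ_three, Matrix.transpose_apply,
        Real.cos_pi_div_two, Real.sin_pi_div_two, Matrix.vecHead, Matrix.vecTail,
        Matrix.vecMul, dotProduct] at h1
      linarith
    have e02 : M 0 2 = 0 := by
      have h1 := key 0 2
      have h2 := key 1 2
      simp [Rz, Matrix.mul_apply, Fin.sum_univ_three, Matrix.transpose_apply,
        Real.cos_pi_div_two, Real.sin_pi_div_two, Matrix.vecHead, Matrix.vecTail,
        Matrix.vecMul, dotProduct] at h1 h2
      linarith
    have e12 : M 1 2 = 0 := by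
      have h1 := key 0 2
      have h2 := key 1 2
      simp [Rz, Matrix.mul_apply, Fin.sum_univ_three, Matrix.transpose_apply,
        Real.cos_pi_div_two, Real.sin_pi_div_two, Matrix.vecHead, Matrix.vecTail,
        Matrix.vecMul, dotProduct] at h1 h2
      linarith
    have e00 : M 0 0 = M 1 1 := by
      have h1 := key 0 0
      simp [Rz, Matrix.mul_apply, Fin.sum_univ_three, Matrix.transpose_apply,
        Real.cos_pi_div_two, Real.sin_pi_div_two, Matrix.vecHead, Matrix.vecTail,
        Matrix.vecMul, dotProduct] at h1
      linarith
    have e22 : M 2 2 = -2 * M 0 0 := by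
      have h := htrace
      simp [Matrix.trace, Matrix.diag, Fin.sum_univ_three] at h
      linarith
    have h10 : M 0 1 = M 1 0 := hsymm.apply 0 1 |>.symm
    have h20 : M 0 2 = M 2 0 := hsymm.apply 0 2 |>.symm
    have h21 : M 1 2 = M 2 1 := hsymm.apply 1 2 |>.symm
    have hs2 : Real.sqrt (3/2) * Real.sqrt (3/2) = 3/2 :=
      Real.mul_self_sqrt (by norm_num)
    refine ⟨-2 * M 0 0 * Real.sqrt (3/2), ?_⟩
    have hs2' := hs2
    simp at hs2'
    ext i j
    fin_cases i <;> fin_cases j <;>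
      simp [L0, Matrix.single, Matrix.one_apply, e01, e02, e12, ← h10, ← h20, ← h21] <;>
      first
        | linear_combination (-(2 * M 0 0)/3) * hs2'
        | linear_combination -e00 + (-(2 * M 0 0)/3) * hs2'
        | linear_combination e22 + (4 * M 0 0/3) * hs2'
  · intro h θ T hT htr
    obtain ⟨c, hc⟩ := h T hT htr
    rw [hc, Matrix.mul_smul, Matrix.smul_mul, Rz_L0]
end
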